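/- Let R be a well-typed SRS over a typed signature Σ. Then →_R is terminating if and only if there is no infinite →_R-reduction consisting of well-typed strings. -/

import Mathlib

namespace CycleRewriting

/-- A binary relation is terminating if there is no infinite reduction sequence. -/
def Terminating {beta : Type*} (r : beta → beta → Prop) : Prop :=
  ¬ ∃ f : ℕ → beta, ∀ n : ℕ, r (f n) (f (n + 1))

/-- `r₁` is terminating relative to `r₂` iff every infinite `r₂`-sequence contains only
finitely many `r₁`-steps. -/
def RelTerminating {beta : Type*} (r₁ r₂ : beta → beta → Prop) : Prop :=
  ¬ ∃ f : ℕ → beta, (∀ n : ℕ, r₂ (f n) (f (n + 1))) ∧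
      {n : ℕ | r₁ (f n) (f (n + 1))}.Infinite

/-- The string rewrite relation of an SRS `R`. -/
def Step {α : Type*} (R : Set (List α × List α)) (x y : List α) : Prop :=
  ∃ u v l r, (l, r) ∈ R ∧ x = u ++ l ++ v ∧ y = u ++ r ++ v

/-- The prefix rewrite relation of an SRS `R`. -/
def PrefixStep {α : Type*} (R : Set (List α × List α)) (x y : List α) : Prop :=
  ∃ l r w, (l, r) ∈ R ∧ x = l ++ w ∧ y = r ++ w

/-- The rotation equivalence `u ~ v` iff `u = w₁w₂` and `v = w₂w₁`. -/
def Sim {α : Type*} (u v : List α) : Prop :=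
  ∃ w₁ w₂, u = w₁ ++ w₂ ∧ v = w₂ ++ w₁

/-- The cycle rewrite relation of an SRS `R` (on representatives of `Sim`-classes):
`[u] ∘→_R [v]` iff there are a rule `(l, r) ∈ R` and `w` with `l ++ w ∈ [u]` and
`r ++ w ∈ [v]`. -/
def CycleStep {α : Type*} (R : Set (List α × List α)) (x y : List α) : Prop :=
  ∃ l r w, (l, r) ∈ R ∧ Sim (l ++ w) x ∧ Sim (r ++ w) y

/-- The shift relation `↷`: move the first symbol of a string to its end. -/
def Rot {α : Type*} (u v : List α) : Prop :=
  ∃ a w, u = a :: w ∧ v = w ++ [a]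

/-- `k`-fold composition of a relation. -/
def RelPow {beta : Type*} (r : beta → beta → Prop) : ℕ → beta → beta → Prop
  | 0 => Eq
  | n + 1 => Relation.Comp r (RelPow r n)

/-- `lenSRS R` is the maximal length of a left-hand side of a rule of `R`. -/
noncomputable def lenSRS {α : Type*} (R : Set (List α × List α)) : ℕ :=
  sSup ((fun p : List α × List α => p.1.length) '' R)

/-- A string is well-typed iff `source aᵢ = target aᵢ₊₁` for all consecutive symbols. -/
def WTStr {α T : Type*} (source target : α → T) (w : List α) : Prop :=
  List.Chain' (fun a b => source a = target b) w

/-- The source of a string: the source of its last symbol. -/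
def strSource {α T : Type*} (source : α → T) (w : List α) : Option T :=
  w.getLast?.map source

/-- The target of a string: the target of its first symbol. -/
def strTarget {α T : Type*} (target : α → T) (w : List α) : Option T :=
  w.head?.map target

/-- An SRS is well-typed if all left-hand sides are nonempty and for every rule `ℓ → r`:
either `r = ε` and `source ℓ = target ℓ`, or `r ≠ ε`, `source ℓ = source r` and
`target ℓ = target r` (with both sides well-typed strings). -/
def WTSRS {α T : Type*} (source target : α → T) (R : Set (List α × List α)) : Prop :=
  ∀ p ∈ R, p.1 ≠ [] ∧ WTStr source target p.1 ∧ WTStr source target p.2 ∧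
    (p.2 = [] → strSource source p.1 = strTarget target p.1) ∧
    (p.2 ≠ [] → strSource source p.1 = strSource source p.2 ∧
                strTarget target p.1 = strTarget target p.2)

section Aux

attribute [local instance] Classical.propDecidable

variable {α T : Type*} (source target : α → T)

/-- boundary defect of two optional types -/
noncomputable def bdo : Option T → Option T → ℕ := fun a b =>
  if ∃ x y, a = some x ∧ b = some y ∧ x ≠ y then 1 else 0

/-- boundary defect between two strings -/
noncomputable def bd (u v : List α) : ℕ :=
  bdo (strSource source u) (strTarget target v)

lemma bdo_le_one (a b : Option T) : bdo a b ≤ 1 := by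
  unfold bdo; split <;> simp

lemma bd_le_one (u v : List α) : bd source target u v ≤ 1 := bdo_le_one _ _

lemma strSource_nil : strSource source ([] : List α) = none := rfl
lemma strTarget_nil : strTarget target ([] : List α) = none := rfl

lemma strSource_some {l : List α} (h : l ≠ []) : ∃ a, strSource source l = some a := by
  obtain ⟨a, ha⟩ := Option.isSome_iff_exists.1 (List.getLast?_isSome.2 h)
  exact ⟨source a, by simp [strSource, ha]⟩

lemma strTarget_some {l : List α} (h : l ≠ []) : ∃ a, strTarget target l = some a := by
  obtain ⟨a, ha⟩ := Option.isSome_iff_exists.1 (List.isSome_head?.2 h)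
  exact ⟨target a, by simp [strTarget, ha]⟩

lemma strSource_append {l : List α} (u : List α) (h : l ≠ []) :
    strSource source (u ++ l) = strSource source l := by
  unfold strSource
  rw [List.getLast?_append]
  obtain ⟨a, ha⟩ := Option.isSome_iff_exists.1 (List.getLast?_isSome.2 h)
  simp [ha]

lemma strTarget_append {l : List α} (v : List α) (h : l ≠ []) :
    strTarget target (l ++ v) = strTarget target l := by
  unfold strTarget
  rw [List.head?_append]
  obtain ⟨a, ha⟩ := Option.isSome_iff_exists.1 (List.isSome_head?.2 h)
  simp [ha]

lemma bd_nil_left (v : List α) : bd source target [] v = 0 := by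
  simp [bd, bdo, strSource]

lemma bd_nil_right (u : List α) : bd source target u [] = 0 := by
  simp [bd, bdo, strTarget]

lemma bd_eq_zero' (u v : List α) : bd source target u v = 0 ↔
    ¬ ∃ a b, strSource source u = some a ∧ strTarget target v = some b ∧ a ≠ b := by
  unfold bd bdo
  split <;> simp_all <;> assumption

lemma bd_eq_zero_iff (u v : List α) : bd source target u v = 0 ↔
    ∀ a b, strSource source u = some a → strTarget target v = some b → a = b := by
  rw [bd_eq_zero']
  push_neg
  tauto
lemma bd_eq_one_iff (u v : List α) : bd source target u v = 1 ↔
    ∃ a b, strSource source u = some a ∧ strTarget target v = some b ∧ a ≠ b := by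
  unfold bd bdo
  split <;> simp_all <;> assumption

lemma bd_append_right {l : List α} (u v : List α) (h : l ≠ []) :
    bd source target u (l ++ v) = bd source target u l := by
  unfold bd; rw [strTarget_append target v h]

lemma bd_append_left {l : List α} (u v : List α) (h : l ≠ []) :
    bd source target (u ++ l) v = bd source target l v := by
  unfold bd; rw [strSource_append source u h]

/-- the number of type conflicts in a string -/
noncomputable def breaks : List α → ℕ
  | [] => 0
  | [_] => 0
  | a :: b :: t => bd source target [a] (b :: t) + breaks (b :: t)

@[simp] lemma breaks_nil : breaks source target ([] : List α) = 0 := rfl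
@[simp] lemma breaks_singleton (a : α) : breaks source target [a] = 0 := rfl
lemma breaks_cons_cons (a b : α) (t : List α) :
    breaks source target (a :: b :: t) =
      bd source target [a] (b :: t) + breaks source target (b :: t) := rfl

lemma breaks_append (u v : List α) :
    breaks source target (u ++ v) =
      breaks source target u + bd source target u v + breaks source target v := by
  induction u with
  | nil => simp [bd_nil_left]
  | cons a u ih =>
    cases u with
    | nil =>
      cases v with
      | nil => simp [bd_nil_right]
      | cons b t => rw [List.singleton_append, breaks_cons_cons]; simp
    | cons a' t =>
      have h1 : bd source target [a] ((a' :: t) ++ v) = bd source target [a] (a' :: t) :=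
        bd_append_right source target _ _ (by simp)
      have h2 : bd source target (a :: a' :: t) v = bd source target (a' :: t) v := by
        have := bd_append_left source target (l := a' :: t) [a] v (by simp)
        simpa using this
      simp only [List.cons_append] at ih h1 ⊢
      rw [breaks_cons_cons, breaks_cons_cons, ih, h1, h2]
      omega

lemma breaks_eq_zero_iff (w : List α) :
    breaks source target w = 0 ↔ WTStr source target w := by
  induction w with
  | nil => simp [WTStr, List.Chain']
  | cons a t ih =>
    cases t with
    | nil => simp [WTStr, List.Chain']
    | cons b t' =>
      rw [breaks_cons_cons, WTStr, List.Chain', List.isChain_cons_cons, Nat.add_eq_zero]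
      have hbd : bd source target [a] (b :: t') = 0 ↔ source a = target b := by
        rw [bd_eq_zero_iff]
        simp [strSource, strTarget]
      rw [hbd, ih]
      exact Iff.rfl
/-- Decomposition of a string into its first maximal well-typed factor and the rest. -/
def Dec (x A B : List α) : Prop :=
  x = A ++ B ∧ WTStr source target A ∧ (B ≠ [] → bd source target A B = 1)

lemma dec_exists (x : List α) : ∃ A B, Dec source target x A B := by
  induction x with
  | nil => exact ⟨[], [], rfl, List.isChain_nil, by simp⟩
  | cons a t ih =>
    obtain ⟨A, B, hx, hA, hbd⟩ := ih
    cases A with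
    | nil =>
      have hB : B = [] := by
        by_contra hB
        obtain ⟨p, q, hp, hq, hpq⟩ := (bd_eq_one_iff source target _ _).1 (hbd hB)
        simp [strSource] at hp
      refine ⟨[a], [], by simp [hx, hB], ?_, by simp⟩
      exact List.isChain_singleton a
    | cons a' A' =>
      by_cases hab : source a = target a'
      · refine ⟨a :: a' :: A', B, by simp [hx], ?_, ?_⟩
        · exact (List.isChain_cons_cons.2 ⟨hab, hA⟩)
        · intro hB
          have h1 := hbd hB
          rw [bd_eq_one_iff] at h1 ⊢
          have : strSource source (a :: a' :: A') = strSource source (a' :: A') := by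
            have := strSource_append source (l := a' :: A') [a] (by simp)
            simpa using this
          rw [this]; exact h1
      · refine ⟨[a], t, by simp [hx], List.isChain_singleton a, ?_⟩
        intro ht
        rw [bd_eq_one_iff]
        refine ⟨source a, target a', by simp [strSource], ?_, hab⟩
        simp [hx, strTarget]

lemma wt_append_head {A m : List α} (h : WTStr source target (A ++ m))
    {a b : T} (ha : strSource source A = some a) (hb : strTarget target m = some b) :
    a = b := by
  rw [WTStr, List.Chain', List.isChain_append] at h
  obtain ⟨x, hx, ha'⟩ : ∃ x, A.getLast? = some x ∧ source x = a := by
    unfold strSource at ha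
    cases h' : A.getLast? with
    | none => simp [h'] at ha
    | some x => simp [h'] at ha; exact ⟨x, rfl, ha⟩
  obtain ⟨y, hy, hb'⟩ : ∃ y, m.head? = some y ∧ target y = b := by
    unfold strTarget at hb
    cases h' : m.head? with
    | none => simp [h'] at hb
    | some y => simp [h'] at hb; exact ⟨y, rfl, hb⟩
  rw [← ha', ← hb']
  exact h.2.2 x hx y hy

lemma dec_unique_aux {x A B A' B' : List α} (h1 : Dec source target x A B)
    (h2 : Dec source target x A' B') (hpre : A <+: A') : A = A' := by
  obtain ⟨m, rfl⟩ := hpre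
  rcases eq_or_ne m [] with rfl | hm
  · simp
  exfalso
  have hB : B = m ++ B' := by
    have := h1.1.symm.trans h2.1
    rw [List.append_assoc] at this
    exact List.append_cancel_left this
  have hBne : B ≠ [] := by simp [hB, hm]
  obtain ⟨a, b, ha, hb, hab⟩ := (bd_eq_one_iff source target _ _).1 (h1.2.2 hBne)
  have hbm : strTarget target m = some b := by
    rw [hB] at hb
    rwa [strTarget_append target B' hm] at hb
  exact hab (wt_append_head source target h2.2.1 ha hbm)

lemma dec_unique {x A B A' B' : List α} (h1 : Dec source target x A B)
    (h2 : Dec source target x A' B') : A = A' ∧ B = B' := by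
  have hp1 : A <+: x := ⟨B, h1.1.symm⟩
  have hp2 : A' <+: x := ⟨B', h2.1.symm⟩
  have hA : A = A' := by
    rcases List.prefix_or_prefix_of_prefix hp1 hp2 with h | h
    · exact dec_unique_aux source target h1 h2 h
    · exact (dec_unique_aux source target h2 h1 h).symm
  subst hA
  exact ⟨rfl, List.append_cancel_left (h1.1.symm.trans h2.1)⟩

noncomputable def fA (x : List α) : List α := (dec_exists source target x).choose

noncomputable def fB (x : List α) : List α :=
  (dec_exists source target x).choose_spec.choose

lemma dec_fA (x : List α) : Dec source target x (fA source target x) (fB source target x) :=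
  (dec_exists source target x).choose_spec.choose_spec

lemma bd_congr_right {v v' : List α} (u : List α)
    (h : strTarget target v = strTarget target v') :
    bd source target u v = bd source target u v' := by
  unfold bd; rw [h]

lemma bd_congr_left {u u' : List α} (v : List α)
    (h : strSource source u = strSource source u') :
    bd source target u v = bd source target u' v := by
  unfold bd; rw [h]

lemma bd_triangle {l u v : List α} (hl : l ≠ [])
    (hsl : strSource source l = strTarget target l)
    (h1 : bd source target u l = 0) (h2 : bd source target l v = 0) :
    bd source target u v = 0 := by
  rw [bd_eq_zero_iff] at h1 h2 ⊢
  intro a b ha hb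
  obtain ⟨tl, htl⟩ := strTarget_some target hl
  obtain ⟨sl, hsl'⟩ := strSource_some source hl
  have e1 : a = tl := h1 a tl ha htl
  have e2 : sl = b := h2 sl b hsl' hb
  have e3 : sl = tl := Option.some.inj ((hsl'.symm.trans hsl).trans htl)
  rw [e1, ← e3, e2]

lemma breaks_append3 {l : List α} (u v : List α) (hl : l ≠ [])
    (hwl : WTStr source target l) :
    breaks source target (u ++ l ++ v) =
      breaks source target u + bd source target u l + bd source target l v
        + breaks source target v := by
  rw [breaks_append source target (u ++ l) v, breaks_append source target u l,
    bd_append_left source target u v hl, (breaks_eq_zero_iff source target l).2 hwl]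
  omega

section Rule

variable {l r : List α} (hl : l ≠ []) (hwl : WTStr source target l)
  (hwr : WTStr source target r)
  (hε : r = [] → strSource source l = strTarget target l)
  (hne : r ≠ [] → strSource source l = strSource source r ∧
    strTarget target l = strTarget target r)

include hl hwl hwr hε hne

lemma step_breaks_le (u v : List α) :
    breaks source target (u ++ r ++ v) ≤ breaks source target (u ++ l ++ v) := by
  rw [breaks_append3 source target u v hl hwl]
  rcases eq_or_ne r [] with rfl | hr
  · simp only [List.append_nil]
    rw [breaks_append source target u v]
    rcases Nat.eq_zero_or_pos (bd source target u l + bd source target l v) with h0 | hpos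
    · have := bd_triangle source target hl (hε rfl)
        (by omega : bd source target u l = 0) (by omega : bd source target l v = 0)
      omega
    · have := bd_le_one source target u v
      omega
  · rw [breaks_append3 source target u v hr hwr,
      bd_congr_right source target u ((hne hr).2.symm),
      bd_congr_left source target v ((hne hr).1.symm)]

lemma dec_cases {u v A B : List α} (hA : Dec source target (u ++ l ++ v) A B) :
    (∃ u₂, u = A ++ u₂ ∧ B = u₂ ++ l ++ v) ∨
    (∃ v₁ v₂, v = v₁ ++ v₂ ∧ A = u ++ l ++ v₁ ∧ B = v₂) := by
  have hx : u ++ l ++ v = A ++ B := hA.1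
  have hp1 : A <+: u ++ l ++ v := ⟨B, hx.symm⟩
  have hp2 : u <+: u ++ l ++ v := ⟨l ++ v, by simp⟩
  rcases List.prefix_or_prefix_of_prefix hp1 hp2 with h | h
  · obtain ⟨u₂, rfl⟩ := h
    left
    refine ⟨u₂, rfl, ?_⟩
    have h2 : A ++ (u₂ ++ l ++ v) = A ++ B := by
      simpa [List.append_assoc] using hx
    exact (List.append_cancel_left h2).symm
  · obtain ⟨m, rfl⟩ := h
    have hmB : m ++ B = l ++ v := by
      have h2 : u ++ (l ++ v) = u ++ (m ++ B) := by
        simpa [List.append_assoc] using hx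
      exact (List.append_cancel_left h2).symm
    have hpm : m <+: l ++ v := ⟨B, hmB⟩
    have hpl : l <+: l ++ v := ⟨v, rfl⟩
    rcases List.prefix_or_prefix_of_prefix hpl hpm with h2 | h2
    · obtain ⟨v₁, rfl⟩ := h2
      right
      refine ⟨v₁, B, ?_, by simp [List.append_assoc], rfl⟩
      have h3 : l ++ (v₁ ++ B) = l ++ v := by
        simpa [List.append_assoc] using hmB
      exact (List.append_cancel_left h3).symm
    · obtain ⟨m₂, hm2⟩ := h2
      rcases eq_or_ne m₂ [] with rfl | hm₂
      · have hml : m = l := by simpa using hm2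
        subst hml
        right
        refine ⟨[], B, ?_, by simp, rfl⟩
        simpa using (List.append_cancel_left hmB).symm
      · rcases eq_or_ne m [] with rfl | hm
        · left
          exact ⟨[], by simp, by simpa using hmB⟩
        · exfalso
          have hB : B = m₂ ++ v := by
            have h3 : m ++ B = m ++ (m₂ ++ v) := by
              rw [hmB, ← hm2, List.append_assoc]
            exact List.append_cancel_left h3
          have hBne : B ≠ [] := by simp [hB, hm₂]
          obtain ⟨a, b, ha, hb, hab⟩ :=
            (bd_eq_one_iff source target _ _).1 (hA.2.2 hBne)
          have haS : strSource source m = some a := by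
            rwa [strSource_append source u hm] at ha
          have hbT : strTarget target m₂ = some b := by
            rw [hB] at hb
            rwa [strTarget_append target v hm₂] at hb
          have hwtm : WTStr source target (m ++ m₂) := hm2.symm ▸ hwl
          exact hab (wt_append_head source target hwtm haS hbT)

lemma step_dec {u v Ax Bx Ay By : List α}
    (hbr : breaks source target (u ++ r ++ v) = breaks source target (u ++ l ++ v))
    (hdx : Dec source target (u ++ l ++ v) Ax Bx)
    (hdy : Dec source target (u ++ r ++ v) Ay By) :
    (Ay = Ax ∧ ∃ u' v', Bx = u' ++ l ++ v' ∧ By = u' ++ r ++ v') ∨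
    (By = Bx ∧ ∃ u' v', Ax = u' ++ l ++ v' ∧ Ay = u' ++ r ++ v') := by
  rcases dec_cases source target hl hwl hwr hε hne hdx with ⟨u₂, hu, hBx⟩ | ⟨v₁, v₂, hv, hAx, hBx⟩
  · -- the first break is inside `u` (or at the `u`-`l` boundary)
    have hAu : Ax <+: u := ⟨u₂, hu.symm⟩
    have hBxne : Bx ≠ [] := by
      simp only [hBx, ne_eq, List.append_eq_nil_iff]
      tauto
    have h1 : bd source target Ax Bx = 1 := hdx.2.2 hBxne
    have hdy' : Dec source target (u ++ r ++ v) Ax (u₂ ++ r ++ v) := by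
      refine ⟨by rw [hu]; simp [List.append_assoc], hdx.2.1, ?_⟩
      intro hne'
      rcases eq_or_ne u₂ [] with rfl | hu₂
      · have hAxu : Ax = u := by simpa using hu.symm
        subst hAxu
        rcases eq_or_ne r [] with rfl | hr
        · -- deleting rule at the boundary
          have hbul : bd source target Ax l = 1 := by
            rw [← h1, hBx]
            simp only [List.nil_append]
            exact (bd_append_right source target Ax v hl).symm ▸ rfl
          have heq : bd source target Ax v = bd source target Ax l + bd source target l v := by
            have e1 := breaks_append3 source target Ax v hl hwl
            have e2 := breaks_append source target Ax v
            simp only [List.append_nil] at hbr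
            rw [e1, e2] at hbr
            omega
          have hle := bd_le_one source target Ax v
          have hble := bd_le_one source target l v
          simp only [List.nil_append]
          omega
        · -- nonempty right-hand side
          simp only [List.nil_append] at hBx ⊢
          rw [← h1, hBx, bd_append_right source target Ax v hl,
            bd_append_right source target Ax v hr]
          exact bd_congr_right source target Ax (hne hr).2.symm
      · -- the break is strictly inside u
        rw [← h1, hBx, List.append_assoc, List.append_assoc,
          bd_append_right source target Ax (l ++ v) hu₂,
          bd_append_right source target Ax (r ++ v) hu₂]
    obtain ⟨hA, hB⟩ := dec_unique source target hdy hdy'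
    exact Or.inl ⟨hA, u₂, v, hBx, hB⟩
  · -- the redex is inside the first well-typed factor
    have h0 : breaks source target Ax = 0 := (breaks_eq_zero_iff source target Ax).2 hdx.2.1
    have e0 := breaks_append3 source target u v₁ hl hwl
    rw [← hAx] at e0
    have hbu : breaks source target u = 0 := by omega
    have hbul : bd source target u l = 0 := by omega
    have hblv : bd source target l v₁ = 0 := by omega
    have hbv : breaks source target v₁ = 0 := by omega
    have hdy' : Dec source target (u ++ r ++ v) (u ++ r ++ v₁) v₂ := by
      refine ⟨by rw [hv]; simp [List.append_assoc], ?_, ?_⟩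
      · rw [← breaks_eq_zero_iff]
        rcases eq_or_ne r [] with rfl | hr
        · simp only [List.append_nil]
          rw [breaks_append source target u v₁]
          have := bd_triangle source target hl (hε rfl) hbul hblv
          omega
        · rw [breaks_append3 source target u v₁ hr hwr,
            bd_congr_right source target u (hne hr).2.symm,
            bd_congr_left source target v₁ (hne hr).1.symm]
          omega
      · intro hv₂
        have h1 : bd source target Ax v₂ = 1 := by
          have := hdx.2.2 (by rw [hBx]; exact hv₂)
          rwa [hBx] at this
        rcases eq_or_ne v₁ [] with rfl | hv₁
        · rcases eq_or_ne r [] with rfl | hr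
          · -- deleting rule, break right after the redex
            have hAxul : Ax = u ++ l := by simpa using hAx
            have hlv : bd source target l v₂ = 1 := by
              rw [← h1, hAxul, bd_append_left source target u v₂ hl]
            have hveq : v = v₂ := by simpa using hv
            subst hveq
            have heq : bd source target u v = bd source target u l + bd source target l v := by
              have e1 := breaks_append3 source target u v hl hwl
              have e2 := breaks_append source target u v
              simp only [List.append_nil] at hbr
              rw [e1, e2] at hbr
              omega
            have hle := bd_le_one source target u v
            simp only [List.append_nil]
            omega
          · simp only [List.append_nil] at h1 ⊢
            rw [hAx] at h1
            simp only [List.append_nil] at h1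
            rw [bd_append_left source target u v₂ hr,
              bd_congr_left source target v₂ ((hne hr).1.symm), 
              ← bd_append_left source target u v₂ hl]
            exact h1
        · rw [bd_append_left source target (u ++ r) v₂ hv₁]
          rw [hAx, bd_append_left source target (u ++ l) v₂ hv₁] at h1
          exact h1
    obtain ⟨hA, hB⟩ := dec_unique source target hdy hdy'
    exact Or.inr ⟨hB.trans hBx.symm, u, v₁, hAx, hA⟩

end Rule

section Seq

variable {beta : Type*}

lemma const_of_not_mem {g : ℕ → beta} {S : Set ℕ}
    (hconst : ∀ n, n ∉ S → g (n+1) = g n) :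
    ∀ a b, a ≤ b → (∀ n, a ≤ n → n < b → n ∉ S) → g b = g a := by
  intro a b hab
  induction b, hab using Nat.le_induction with
  | base => intro _; rfl
  | succ b hab ih =>
    intro hgap
    rw [hconst b (hgap b hab (Nat.lt_succ_self b))]
    exact ih (fun n hn hnb => hgap n hn (hnb.trans (Nat.lt_succ_self b)))

lemma extract_infinite {r : beta → beta → Prop} {g : ℕ → beta}
    (hg : ∀ n, r (g n) (g (n+1)) ∨ g (n+1) = g n)
    (hS : {n | r (g n) (g (n+1))}.Infinite) :
    ∃ φ : ℕ → beta, (∀ k, r (φ k) (φ (k+1))) ∧ ∀ k, ∃ n, φ k = g n := by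
  set S := {n | r (g n) (g (n+1))} with hSdef
  have hex : ∀ m, ∃ n, m < n ∧ n ∈ S := by
    intro m
    by_contra hcon
    push_neg at hcon
    refine hS (Set.Finite.subset (Set.finite_Iic m) (fun n hn => Set.mem_Iic.2 ?_))
    rcases le_or_gt n m with h' | h'
    · exact h'
    · exact absurd hn (hcon n h')
  let F : ℕ → ℕ := fun m => sInf {n | m < n ∧ n ∈ S}
  have hF1 : ∀ m, m < F m ∧ F m ∈ S := fun m => Nat.sInf_mem (hex m)
  have hF2 : ∀ m n, m < n → n ∈ S → F m ≤ n := fun m n h1 h2 => Nat.sInf_le ⟨h1, h2⟩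
  let e : ℕ → ℕ := fun k => Nat.rec (F 0) (fun _ prev => F prev) k
  have hstep : ∀ k, e k < e (k+1) ∧ e (k+1) ∈ S := fun k => hF1 (e k)
  have hmin : ∀ k n, e k < n → n ∈ S → e (k+1) ≤ n :=
    fun k n h1 h2 => hF2 (e k) n h1 h2
  have hmem : ∀ k, e k ∈ S := by
    intro k
    cases k with
    | zero => exact (hF1 0).2
    | succ k => exact (hstep k).2
  have hconst : ∀ n, n ∉ S → g (n+1) = g n := fun n hn => (hg n).resolve_left hn
  refine ⟨fun k => g (e k), fun k => ?_, fun k => ⟨e k, rfl⟩⟩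
  have h1 : r (g (e k)) (g (e k + 1)) := hmem k
  have h2 : g (e (k+1)) = g (e k + 1) := by
    refine const_of_not_mem hconst (e k + 1) (e (k+1)) (hstep k).1 ?_
    intro n hn hnb hnS
    exact absurd (hmin k n (by omega) hnS) (by omega)
  show r (g (e k)) (g (e (k+1)))
  rw [h2]
  exact h1

end Seq

variable {R : Set (List α × List α)}

lemma step_breaks_le' (hwt : WTSRS source target R) {x y : List α} (hst : Step R x y) :
    breaks source target y ≤ breaks source target x := by
  obtain ⟨u, v, l, r, hmem, rfl, rfl⟩ := hst
  obtain ⟨hl, hwl, hwr, hε', hne'⟩ := hwt (l, r) hmem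
  exact step_breaks_le source target hl hwl hwr hε' hne' u v

lemma no_const_breaks (hwt : WTSRS source target R)
    (H : ¬ ∃ f : ℕ → List α, (∀ n : ℕ, Step R (f n) (f (n + 1))) ∧
          (∀ n : ℕ, WTStr source target (f n))) :
    ∀ (b : ℕ) (f : ℕ → List α), (∀ n, Step R (f n) (f (n+1))) →
      (∀ n, breaks source target (f n) = b) → False := by
  intro b
  induction b with
  | zero =>
    intro f hstep hbr
    exact H ⟨f, hstep, fun n => (breaks_eq_zero_iff source target _).1 (hbr n)⟩
  | succ b ih =>
    intro f hstep hbr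
    set g : ℕ → List α := fun n => fA source target (f n) with hg
    set h : ℕ → List α := fun n => fB source target (f n) with hh
    have hdec : ∀ n, Dec source target (f n) (g n) (h n) := fun n => dec_fA source target (f n)
    have D : ∀ n, (g (n+1) = g n ∧ Step R (h n) (h (n+1))) ∨
        (h (n+1) = h n ∧ Step R (g n) (g (n+1))) := by
      intro n
      obtain ⟨u, v, l, r, hmem, hx, hy⟩ := hstep n
      obtain ⟨hl, hwl, hwr, hε', hne'⟩ := hwt (l, r) hmem
      have hd1 : Dec source target (u ++ l ++ v) (g n) (h n) := hx ▸ hdec n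
      have hd2 : Dec source target (u ++ r ++ v) (g (n+1)) (h (n+1)) := hy ▸ hdec (n+1)
      have hbreq : breaks source target (u ++ r ++ v) = breaks source target (u ++ l ++ v) := by
        rw [← hx, ← hy, hbr n, hbr (n+1)]
      rcases step_dec source target hl hwl hwr hε' hne' hbreq hd1 hd2 with
        ⟨hA, u', v', h1, h2⟩ | ⟨hB, u', v', h1, h2⟩
      · exact Or.inl ⟨hA, u', v', l, r, hmem, h1, h2⟩
      · exact Or.inr ⟨hB, u', v', l, r, hmem, h1, h2⟩
    by_cases hS : {n | Step R (g n) (g (n+1))}.Infinite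
    · have hgor : ∀ n, Step R (g n) (g (n+1)) ∨ g (n+1) = g n := by
        intro n
        rcases D n with ⟨hA, _⟩ | ⟨_, hs2⟩
        · exact Or.inr hA
        · exact Or.inl hs2
      obtain ⟨φ, hφ, hval⟩ := extract_infinite hgor hS
      refine H ⟨φ, hφ, fun k => ?_⟩
      obtain ⟨n, hn⟩ := hval k
      rw [hn]
      exact (hdec n).2.1
    · rw [Set.not_infinite] at hS
      obtain ⟨N, hN⟩ : ∃ N, ∀ n, N ≤ n → ¬ Step R (g n) (g (n+1)) := by
        rcases Set.Finite.bddAbove hS with ⟨M, hM⟩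
        exact ⟨M + 1, fun n hn hmem' => by have := hM hmem'; omega⟩
      have hbh : ∀ n, breaks source target (h n) = b := by
        intro n
        have hfn := (hdec n).1
        have hgwt : breaks source target (g n) = 0 :=
          (breaks_eq_zero_iff source target _).2 (hdec n).2.1
        have hb := hbr n
        rw [hfn, breaks_append] at hb
        have hhne : h n ≠ [] := by
          intro hnil
          rw [hnil, bd_nil_right, breaks_nil] at hb
          omega
        have hbd1 := (hdec n).2.2 hhne
        omega
      refine ih (fun k => h (N + k)) (fun k => ?_) (fun k => hbh _)
      rcases D (N + k) with ⟨_, hstep'⟩ | ⟨_, hstep'⟩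
      · exact hstep'
      · exact absurd hstep' (hN (N + k) (by omega))

end Aux

/-- type introduction for string termination. -/
theorem type_introduction {α T : Type*} [Finite α] (source target : α → T)
    (R : Set (List α × List α)) (hfin : R.Finite) (hwt : WTSRS source target R) :
    Terminating (Step R) ↔
      ¬ ∃ f : ℕ → List α, (∀ n : ℕ, Step R (f n) (f (n + 1))) ∧
          (∀ n : ℕ, WTStr source target (f n)) := by
  constructor
  · intro hterm
    rintro ⟨f, hs, _⟩
    exact hterm ⟨f, hs⟩
  · intro H hinf
    obtain ⟨f, hstep⟩ := hinf
    have hmono : ∀ n m, n ≤ m → breaks source target (f m) ≤ breaks source target (f n) := by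
      intro n m hnm
      induction m, hnm using Nat.le_induction with
      | base => exact le_refl _
      | succ m hm ih => exact le_trans (step_breaks_le' source target hwt (hstep m)) ih
    obtain ⟨N, hN⟩ := Nat.sInf_mem (Set.range_nonempty (fun n => breaks source target (f n)))
    exact no_const_breaks source target hwt H
      (sInf (Set.range fun n => breaks source target (f n)))
      (fun k => f (N + k)) (fun k => hstep (N + k))
      (fun k => le_antisymm (le_trans (hmono N (N + k) (by omega)) (le_of_eq hN))
        (Nat.sInf_le ⟨N + k, rfl⟩))

end CycleRewriting
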